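/- (Probabilistic core of Theorem T:conv.) Let A ∈ ℤ^{N×M}, u ∈ ℤ^N, let B ∈ ℤ^{M×K} be a lattice basis matrix for A, and let S be a finite nonempty subset of F_A(u). Let ((x_t, Y_t))_{t∈ℕ} be an independent sequence of pairs where each x_t is uniformly distributed on S, each Y_t is distributed according to the product-Skellam distribution on ℤ^K with rate vectors λ⁺, λ⁻ ∈ (0,∞)^K, and x_t and Y_t are independent of each other and of all other pairs. Then for every x ∈ F_A(u), almost surely there exists t ∈ ℕ with x = x_t + B Y_t. -/

import Mathlib

open MeasureTheory ProbabilityTheory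

/-- The Skellam probability mass function at `z ∈ ℤ`: the law of the difference of two
independent Poisson random variables with rates `lp` and `lm`. -/
noncomputable def skellamPMF (lp lm : ℝ) (z : ℤ) : ℝ :=
  ∑' ab : ℕ × ℕ,
    if (ab.1 : ℤ) - (ab.2 : ℤ) = z then
      (Real.exp (-lp) * lp ^ ab.1 / (Nat.factorial ab.1)) *
        (Real.exp (-lm) * lm ^ ab.2 / (Nat.factorial ab.2))
    else 0

/-- The product-Skellam probability mass function on `ℤ^K` with rate vectors `lp, lm`. -/
noncomputable def productSkellamPMF {K : ℕ} (lp lm : Fin K → ℝ) (y : Fin K → ℤ) : ℝ :=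
  ∏ k, skellamPMF (lp k) (lm k) (y k)

lemma skellam_aux_summable (lp lm : ℝ) (z : ℤ) :
    Summable (fun ab : ℕ × ℕ =>
      if (ab.1 : ℤ) - (ab.2 : ℤ) = z then
        (Real.exp (-lp) * lp ^ ab.1 / (Nat.factorial ab.1)) *
          (Real.exp (-lm) * lm ^ ab.2 / (Nat.factorial ab.2))
      else 0) := by
  have h1 : Summable (fun a : ℕ => |Real.exp (-lp) * lp ^ a / (Nat.factorial a)|) := by
    simp_rw [abs_div, abs_mul, abs_pow]
    simpa [mul_div_assoc] using ((Real.summable_pow_div_factorial |lp|).mul_left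
      |Real.exp (-lp)|)
  have h2 : Summable (fun b : ℕ => |Real.exp (-lm) * lm ^ b / (Nat.factorial b)|) := by
    simp_rw [abs_div, abs_mul, abs_pow]
    simpa [mul_div_assoc] using ((Real.summable_pow_div_factorial |lm|).mul_left
      |Real.exp (-lm)|)
  have hprod := Summable.mul_of_nonneg h1 h2 (fun _ => abs_nonneg _) (fun _ => abs_nonneg _)
  refine Summable.of_norm_bounded hprod ?_
  rintro ⟨a, b⟩
  by_cases h : (a : ℤ) - (b : ℤ) = z
  · simp only [h, if_true, Real.norm_eq_abs, abs_mul]; exact le_rfl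
  · simp [h, abs_nonneg, mul_nonneg]

lemma skellamPMF_pos {lp lm : ℝ} (hlp : 0 < lp) (hlm : 0 < lm) (z : ℤ) :
    0 < skellamPMF lp lm z := by
  set f : ℕ × ℕ → ℝ := fun ab =>
    if (ab.1 : ℤ) - (ab.2 : ℤ) = z then
      (Real.exp (-lp) * lp ^ ab.1 / (Nat.factorial ab.1)) *
        (Real.exp (-lm) * lm ^ ab.2 / (Nat.factorial ab.2))
    else 0 with hf
  have hnn : ∀ ab, 0 ≤ f ab := by
    intro ab
    simp only [hf]
    split
    · positivity
    · exact le_refl 0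
  obtain ⟨i₀, hi₀⟩ : ∃ i₀ : ℕ × ℕ, (i₀.1 : ℤ) - (i₀.2 : ℤ) = z := by
    rcases le_or_gt 0 z with h | h
    · exact ⟨(z.toNat, 0), by simp [Int.toNat_of_nonneg h]⟩
    · exact ⟨(0, (-z).toNat), by simp [Int.toNat_of_nonneg (by omega : (0:ℤ) ≤ -z)]⟩
  have hpos : 0 < f i₀ := by
    simp only [hf, hi₀, if_true]
    have := Nat.factorial_pos i₀.1
    have := Nat.factorial_pos i₀.2
    positivity
  calc 0 < f i₀ := hpos
    _ ≤ skellamPMF lp lm z := Summable.le_tsum (skellam_aux_summable lp lm z) i₀ (fun j _ => hnn j)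

lemma productSkellamPMF_pos {K : ℕ} {lp lm : Fin K → ℝ} (hlp : ∀ k, 0 < lp k)
    (hlm : ∀ k, 0 < lm k) (y : Fin K → ℤ) : 0 < productSkellamPMF lp lm y :=
  Finset.prod_pos fun k _ => skellamPMF_pos (hlp k) (hlm k) (y k)

/-- probabilistic core of Theorem T:conv.
Let `S` be a finite nonempty subset of the fiber `F_A(u)` and let `((x_t, Y_t))_{t∈ℕ}` be an
independent sequence of pairs where `x_t` is uniform on `S`, `Y_t` is product-Skellam with
strictly positive rates, and `x_t, Y_t` are independent within each pair (encoded by the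
product form of the joint law).  Then for every `x ∈ F_A(u)`, almost surely some step `t`
satisfies `x = x_t + B Y_t`. -/
theorem ae_exists_discovery_from_uniform_restart
    (N M K : ℕ) (hN : 1 ≤ N) (hM : 1 ≤ M) (hK : 1 ≤ K)
    (A : Matrix (Fin N) (Fin M) ℤ) (u : Fin N → ℤ)
    (B : Matrix (Fin M) (Fin K) ℤ)
    (hBker : ∀ k : Fin K, A.mulVec (fun m => B m k) = 0)
    (hBspan : ∀ v : Fin M → ℤ, A.mulVec v = 0 → ∃ y : Fin K → ℤ, v = B.mulVec y)
    (S : Finset (Fin M → ℤ)) (hSne : S.Nonempty)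
    (hSsub : ∀ s ∈ S, A.mulVec s = u ∧ ∀ m, 0 ≤ s m)
    (lp lm : Fin K → ℝ) (hlp : ∀ k, 0 < lp k) (hlm : ∀ k, 0 < lm k)
    (Ω : Type*) [MeasurableSpace Ω] (μ : Measure Ω) [IsProbabilityMeasure μ]
    (Z : ℕ → Ω → (Fin M → ℤ) × (Fin K → ℤ))
    (hmeas : ∀ t, Measurable (Z t))
    (hindep : iIndepFun Z μ)
    (hlaw : ∀ t (s : Fin M → ℤ) (y : Fin K → ℤ),
      μ {ω | Z t ω = (s, y)} =
        if s ∈ S then (S.card : ENNReal)⁻¹ * ENNReal.ofReal (productSkellamPMF lp lm y)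
        else 0) :
    ∀ x : Fin M → ℤ, (A.mulVec x = u ∧ ∀ m, 0 ≤ x m) →
      ∀ᵐ ω ∂μ, ∃ t : ℕ, x = (Z t ω).1 + B.mulVec (Z t ω).2 := by
  intro x hx
  obtain ⟨s₀, hs₀⟩ := hSne
  obtain ⟨hAs₀, -⟩ := hSsub s₀ hs₀
  have hker : A.mulVec (x - s₀) = 0 := by
    rw [Matrix.mulVec_sub, hx.1, hAs₀, sub_self]
  obtain ⟨y₀, hy₀⟩ := hBspan _ hker
  have hxeq : x = s₀ + B.mulVec y₀ := by rw [← hy₀]; abel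
  set D : Set ((Fin M → ℤ) × (Fin K → ℤ)) := {p | x = p.1 + B.mulVec p.2} with hD
  have hDmeas : MeasurableSet D := (Set.to_countable D).measurableSet
  set E : ℕ → Set Ω := fun t => Z t ⁻¹' D with hE
  have hEmeas : ∀ t, MeasurableSet (E t) := fun t => (hmeas t) hDmeas
  set c : ENNReal := (S.card : ENNReal)⁻¹ * ENNReal.ofReal (productSkellamPMF lp lm y₀) with hcdef
  have hc : 0 < c := by
    apply ENNReal.mul_pos
    · exact ENNReal.inv_ne_zero.mpr (ENNReal.natCast_ne_top _)
    · exact (ENNReal.ofReal_pos.mpr (productSkellamPMF_pos hlp hlm y₀)).ne'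
  have hle : ∀ t, c ≤ μ (E t) := by
    intro t
    have hsub : {ω | Z t ω = (s₀, y₀)} ⊆ E t := by
      intro ω hω
      have : Z t ω = (s₀, y₀) := hω
      simp only [hE, Set.mem_preimage, hD, Set.mem_setOf_eq, this]
      exact hxeq
    calc c = μ {ω | Z t ω = (s₀, y₀)} := by rw [hlaw t s₀ y₀, if_pos hs₀]
      _ ≤ μ (E t) := measure_mono hsub
  have htsum : ∑' t, μ (E t) = ⊤ := by
    refine top_le_iff.mp ?_
    calc (⊤ : ENNReal) = ∑' _ : ℕ, c := (ENNReal.tsum_const_eq_top_of_ne_zero hc.ne').symm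
      _ ≤ ∑' t, μ (E t) := ENNReal.tsum_le_tsum hle
  have hindepE : iIndepSet E μ := by
    rw [iIndepSet_iff_meas_biInter hEmeas]
    intro s
    exact hindep.measure_inter_preimage_eq_mul s (fun i _ => hDmeas)
  have hlimsup := ProbabilityTheory.measure_limsup_eq_one hEmeas hindepE htsum
  have hsub2 : Filter.limsup E Filter.atTop ⊆
      {ω | ∃ t, x = (Z t ω).1 + B.mulVec (Z t ω).2} := by
    intro ω hω
    rw [Filter.limsup_eq_iInf_iSup_of_nat] at hω
    simp only [Set.iInf_eq_iInter, Set.iSup_eq_iUnion, Set.mem_iInter, Set.mem_iUnion] at hω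
    obtain ⟨t, _, ht⟩ := hω 0
    exact ⟨t, ht⟩
  rw [ae_iff]
  have hnull : μ (Filter.limsup E Filter.atTop)ᶜ = 0 := by
    rw [measure_compl (MeasurableSet.measurableSet_limsup hEmeas) (measure_ne_top μ _), hlimsup]
    simp
  exact measure_mono_null (fun ω h hmem => h (hsub2 hmem)) hnull
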